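/- Every residually-(torsion-free nilpotent) group is orderable: if G is a group such that for every nontrivial g ∈ G there exists a normal subgroup N of G with g ∉ N and G/N torsion-free nilpotent, then there exists a subset P ⊆ G such that {P, P⁻¹} is a partition of G \ {1} (i.e. every nontrivial element lies in exactly one of P and P⁻¹ = {x⁻¹ : x ∈ P}), P·P ⊆ P, and gPg⁻¹ ⊆ P for every g ∈ G. -/

import Mathlib

open Subgroup

universe u

/-- Torsion-free monoids (replacement for the removed Mathlib definition). -/
abbrev Monoid.IsTorsionFree (M : Type*) [Monoid M] : Prop :=
  ∀ g : M, g ≠ 1 → ¬IsOfFinOrder g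

lemma Monoid.IsTorsionFree.subgroup {G : Type*} [Group G] (htf : Monoid.IsTorsionFree G)
    (H : Subgroup G) : Monoid.IsTorsionFree H := by
  intro g hg hfin
  obtain ⟨n, hn, h⟩ := isOfFinOrder_iff_pow_eq_one.mp hfin
  exact htf g (fun e => hg (Subtype.ext e))
    (isOfFinOrder_iff_pow_eq_one.mpr ⟨n, hn, by simpa using congrArg Subtype.val h⟩)

section Cone

variable {G : Type u} [Group G]

/-- A positive cone on a group. -/
def IsPosCone (P : Set G) : Prop :=
  (1 : G) ∉ P ∧
  (∀ g : G, g ≠ 1 → (g ∈ P ↔ g⁻¹ ∉ P)) ∧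
  (∀ x ∈ P, ∀ y ∈ P, x * y ∈ P) ∧
  (∀ g : G, ∀ x ∈ P, g * x * g⁻¹ ∈ P)

lemma IsPosCone.ne_one {P : Set G} (h : IsPosCone P) {g : G} (hg : g ∈ P) : g ≠ 1 :=
  fun e => h.1 (e ▸ hg)

lemma IsPosCone.inv_not_mem {P : Set G} (h : IsPosCone P) {g : G} (hg : g ∈ P) : g⁻¹ ∉ P :=
  (h.2.1 g (h.ne_one hg)).mp hg

lemma IsPosCone.total {P : Set G} (h : IsPosCone P) {g : G} (hg : g ≠ 1) (hng : g ∉ P) :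
    g⁻¹ ∈ P := by
  by_contra hn
  exact hng ((h.2.1 g hg).mpr hn)

lemma isPosCone_empty_of_subsingleton [Subsingleton G] : IsPosCone (∅ : Set G) := by
  refine ⟨fun h => h, fun g hg => absurd (Subsingleton.elim g 1) hg, ?_, ?_⟩ <;> simp

end Cone

section Comm

variable {A : Type u} [CommGroup A]

/-- Torsion-free abelian groups admit a positive cone (Zorn's lemma). -/
lemma exists_isPosCone_of_commGroup (htf : Monoid.IsTorsionFree A) :
    ∃ P : Set A, IsPosCone P := by
  classical
  set S : Set (Set A) := {P | (∀ x ∈ P, ∀ y ∈ P, x * y ∈ P) ∧ ∀ x ∈ P, x⁻¹ ∉ P} with hSdef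
  have hchain : ∀ c ⊆ S, IsChain (· ⊆ ·) c → ∃ ub ∈ S, ∀ s ∈ c, s ⊆ ub := by
    intro c hcS hc
    refine ⟨⋃₀ c, ⟨?_, ?_⟩, fun s hs => Set.subset_sUnion_of_mem hs⟩
    · rintro x ⟨s, hs, hxs⟩ y ⟨t, ht, hyt⟩
      rcases hc.total hs ht with hst | hts
      · exact ⟨t, ht, (hcS ht).1 x (hst hxs) y hyt⟩
      · exact ⟨s, hs, (hcS hs).1 x hxs y (hts hyt)⟩
    · rintro x ⟨s, hs, hxs⟩ ⟨t, ht, hxt⟩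
      rcases hc.total hs ht with hst | hts
      · exact (hcS ht).2 x (hst hxs) hxt
      · exact (hcS hs).2 x hxs (hts hxt)
  obtain ⟨P, hPmax⟩ := zorn_subset S hchain
  have hmul : ∀ x ∈ P, ∀ y ∈ P, x * y ∈ P := hPmax.1.1
  have hinv : ∀ x ∈ P, x⁻¹ ∉ P := hPmax.1.2
  have hone : (1 : A) ∉ P := fun h => hinv 1 h (by simpa using h)
  have hpow : ∀ x ∈ P, ∀ n : ℕ, 0 < n → x ^ n ∈ P := by
    intro x hx n hn
    induction n with
    | zero => omega
    | succ n ih =>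
      rcases Nat.eq_zero_or_pos n with rfl | hn'
      · simpa using hx
      · rw [pow_succ]; exact hmul _ (ih hn') _ hx
  -- the key extension step
  have key : ∀ h : A, h ≠ 1 → h ∉ P → ∃ (k : ℕ) (r : A), 0 < k ∧ r ∈ P ∧ h ^ k * r = 1 := by
    intro h hne hnP
    set E : Set A := {x | ∃ (n : ℕ) (p : A), (p ∈ P ∨ p = 1) ∧ (0 < n ∨ p ∈ P) ∧ x = h ^ n * p}
      with hEdef
    have hPE : P ⊆ E := fun x hx => ⟨0, x, Or.inl hx, Or.inr hx, by simp⟩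
    have hhE : h ∈ E := ⟨1, 1, Or.inr rfl, Or.inl one_pos, by simp⟩
    have hEmul : ∀ x ∈ E, ∀ y ∈ E, x * y ∈ E := by
      rintro x ⟨n, p, hp, hnp, rfl⟩ y ⟨m, q, hq, hmq, rfl⟩
      refine ⟨n + m, p * q, ?_, ?_, by rw [pow_add]; exact (mul_mul_mul_comm _ _ _ _).symm⟩
      · rcases hp with hp | rfl
        · rcases hq with hq | rfl
          · exact Or.inl (hmul _ hp _ hq)
          · exact Or.inl (by simpa using hp)
        · simpa using hq
      · rcases hnp with hn | hp
        · exact Or.inl (by omega)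
        · rcases hmq with hm | hq
          · exact Or.inl (by omega)
          · exact Or.inr (hmul _ hp _ hq)
    have hEnS : E ∉ S := by
      intro hES
      exact hnP (hPmax.2 hES hPE hhE)
    have hbad : ∃ x ∈ E, x⁻¹ ∈ E := by
      by_contra hcon
      push_neg at hcon
      exact hEnS ⟨hEmul, hcon⟩
    obtain ⟨x, ⟨n, p, hp, hnp, rfl⟩, m, q, hq, hmq, hinvx⟩ := hbad
    -- (h^n p)⁻¹ = h^m q, so h^(n+m) * (p*q) = 1
    have hprod : h ^ (n + m) * (p * q) = 1 := by
      have h1 : (h ^ n * p) * (h ^ m * q) = 1 := by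
        rw [← hinvx]; group
      rw [pow_add]
      calc h ^ n * h ^ m * (p * q) = (h ^ n * p) * (h ^ m * q) := mul_mul_mul_comm _ _ _ _
        _ = 1 := h1
    have hpq : p * q ∈ P ∨ p * q = 1 := by
      rcases hp with hp | rfl
      · rcases hq with hq | rfl
        · exact Or.inl (hmul _ hp _ hq)
        · exact Or.inl (by simpa using hp)
      · simpa using hq
    rcases Nat.eq_zero_or_pos (n + m) with hnm | hnm
    · -- then p, q ∈ P and p * q = 1, contradiction
      exfalso
      have hpP : p ∈ P := hnp.resolve_left (by omega)
      have hqP : q ∈ P := hmq.resolve_left (by omega)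
      have hpq1 : p * q = 1 := by
        have : h ^ (n + m) = 1 := by rw [hnm, pow_zero]
        rw [this, one_mul] at hprod; exact hprod
      have : q = p⁻¹ := eq_inv_of_mul_eq_one_right hpq1
      exact hinv p hpP (this ▸ hqP)
    rcases hpq with hpq | hpq
    · exact ⟨n + m, p * q, hnm, hpq, hprod⟩
    · exfalso
      have : h ^ (n + m) = 1 := by rw [hpq, mul_one] at hprod; exact hprod
      exact htf h hne (isOfFinOrder_iff_pow_eq_one.mpr ⟨n + m, hnm, this⟩)
  refine ⟨P, hone, ?_, hmul, ?_⟩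
  · intro g hg
    constructor
    · intro hgP hgi
      exact hinv g hgP hgi
    · intro hgi
      by_contra hgP
      obtain ⟨a, s, ha, hs, hgs⟩ := key g hg hgP
      obtain ⟨b, t, hb, ht, hgt⟩ := key g⁻¹ (by simpa using hg) hgi
      -- g^a = s⁻¹ and (g⁻¹)^b = t⁻¹, so t^a * s^b = 1
      have h1 : g ^ a = s⁻¹ := eq_inv_of_mul_eq_one_left hgs
      have h2 : g ^ b = t := by
        have h2' : (g⁻¹) ^ b = t⁻¹ := eq_inv_of_mul_eq_one_left hgt
        rw [inv_pow] at h2'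
        exact inv_injective h2'
      have h3 : t ^ a * s ^ b = 1 := by
        have e1 : g ^ (a * b) = (s ^ b)⁻¹ := by rw [pow_mul, h1, inv_pow]
        have e2 : g ^ (b * a) = t ^ a := by rw [pow_mul, h2]
        rw [← e2, mul_comm b a, e1, inv_mul_cancel]
      have hta : t ^ a ∈ P := hpow t ht a ha
      have hsb : s ^ b ∈ P := hpow s hs b hb
      exact hone (h3 ▸ hmul _ hta _ hsb)
  · intro g x hx
    have hgx : g * x * g⁻¹ = x := by rw [mul_comm g x, mul_assoc]; simp
    rwa [hgx]

end Comm

section Malcev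

variable {G : Type u} [Group G]

/-- If the commutator of `a` and `b` is central, commutators of powers are powers. -/
lemma comm_pow_of_center (a b : G) (h : a * b * a⁻¹ * b⁻¹ ∈ center G) (n : ℕ) :
    a ^ n * b * (a ^ n)⁻¹ * b⁻¹ = (a * b * a⁻¹ * b⁻¹) ^ n := by
  induction n with
  | zero => simp
  | succ n ih =>
    have hc : (a * b * a⁻¹ * b⁻¹) ^ n ∈ center G := pow_mem h n
    have hcomm : a * (a * b * a⁻¹ * b⁻¹) ^ n = (a * b * a⁻¹ * b⁻¹) ^ n * a :=
      Subgroup.mem_center_iff.mp hc a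
    calc a ^ (n + 1) * b * (a ^ (n + 1))⁻¹ * b⁻¹
        = a * (a ^ n * b * (a ^ n)⁻¹ * b⁻¹) * a⁻¹ * (a * b * a⁻¹ * b⁻¹) := by group
      _ = a * (a * b * a⁻¹ * b⁻¹) ^ n * a⁻¹ * (a * b * a⁻¹ * b⁻¹) := by rw [ih]
      _ = (a * b * a⁻¹ * b⁻¹) ^ n * (a * a⁻¹) * (a * b * a⁻¹ * b⁻¹) := by
          rw [← mul_assoc, hcomm]; group
      _ = (a * b * a⁻¹ * b⁻¹) ^ (n + 1) := by rw [pow_succ]; group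

/-- The image of an element of `Z_{i+1}` is central in `G ⧸ Z_i`. -/
lemma mk_mem_center_of_ucs {i : ℕ} {c : G} (hc : c ∈ Subgroup.upperCentralSeries G (i + 1)) :
    (QuotientGroup.mk c : G ⧸ Subgroup.upperCentralSeries G i) ∈ center (G ⧸ Subgroup.upperCentralSeries G i) := by
  rw [Subgroup.mem_center_iff]
  intro w
  induction w using QuotientGroup.induction_on with
  | H z =>
    rw [← QuotientGroup.mk_mul, ← QuotientGroup.mk_mul]
    apply QuotientGroup.eq.mpr
    have h1 : c * z⁻¹ * c⁻¹ * z⁻¹⁻¹ ∈ Subgroup.upperCentralSeries G i :=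
      Subgroup.mem_upperCentralSeries_succ_iff.mp hc z⁻¹
    have h2 : c⁻¹ * (c * z⁻¹ * c⁻¹ * z⁻¹⁻¹) * c⁻¹⁻¹ ∈ Subgroup.upperCentralSeries G i :=
      (inferInstance : (Subgroup.upperCentralSeries G i).Normal).conj_mem _ h1 c⁻¹
    have h3 : (z * c)⁻¹ * (c * z) = (c⁻¹ * (c * z⁻¹ * c⁻¹ * z⁻¹⁻¹) * c⁻¹⁻¹)⁻¹ := by group
    rw [h3]
    exact inv_mem h2

lemma ucs_step (htf : Monoid.IsTorsionFree G) (i : ℕ) :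
    ∀ x : G, ∀ n : ℕ, 0 < n → x ∈ Subgroup.upperCentralSeries G (i + 1) →
      x ^ n ∈ Subgroup.upperCentralSeries G i → x ∈ Subgroup.upperCentralSeries G i := by
  induction i with
  | zero =>
    intro x n hn _ hxn
    rw [Subgroup.upperCentralSeries_zero, Subgroup.mem_bot] at hxn ⊢
    by_contra hne
    exact htf x hne (isOfFinOrder_iff_pow_eq_one.mpr ⟨n, hn, hxn⟩)
  | succ i ih =>
    intro x n hn hx1 hxn
    rw [Subgroup.mem_upperCentralSeries_succ_iff]
    intro y
    set c := x * y * x⁻¹ * y⁻¹ with hcdef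
    have hc1 : c ∈ Subgroup.upperCentralSeries G (i + 1) := Subgroup.mem_upperCentralSeries_succ_iff.mp hx1 y
    apply ih c n hn hc1
    -- show c ^ n ∈ Z_i using the quotient G ⧸ Z_i
    have hd : x ^ n * y * (x ^ n)⁻¹ * y⁻¹ ∈ Subgroup.upperCentralSeries G i :=
      Subgroup.mem_upperCentralSeries_succ_iff.mp hxn y
    have hmkc : (QuotientGroup.mk x : G ⧸ Subgroup.upperCentralSeries G i) * QuotientGroup.mk y *
        (QuotientGroup.mk x)⁻¹ * (QuotientGroup.mk y)⁻¹ = QuotientGroup.mk c := by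
      rw [hcdef, QuotientGroup.mk_mul, QuotientGroup.mk_mul, QuotientGroup.mk_mul,
        QuotientGroup.mk_inv, QuotientGroup.mk_inv]
    have hcen : (QuotientGroup.mk c : G ⧸ Subgroup.upperCentralSeries G i) ∈
        center (G ⧸ Subgroup.upperCentralSeries G i) := mk_mem_center_of_ucs hc1
    have hpow := comm_pow_of_center (QuotientGroup.mk x : G ⧸ Subgroup.upperCentralSeries G i)
      (QuotientGroup.mk y) (hmkc ▸ hcen) n
    rw [← QuotientGroup.eq_one_iff]
    have hd1 : ((QuotientGroup.mk x : G ⧸ Subgroup.upperCentralSeries G i)) ^ n * QuotientGroup.mk y *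
        (((QuotientGroup.mk x : G ⧸ Subgroup.upperCentralSeries G i)) ^ n)⁻¹ *
        (QuotientGroup.mk y)⁻¹ = 1 := by
      have h0 : ((x ^ n * y * (x ^ n)⁻¹ * y⁻¹ : G) : G ⧸ Subgroup.upperCentralSeries G i) = 1 :=
        (QuotientGroup.eq_one_iff _).mpr hd
      rw [QuotientGroup.mk_mul, QuotientGroup.mk_mul, QuotientGroup.mk_mul,
        QuotientGroup.mk_inv, QuotientGroup.mk_inv, QuotientGroup.mk_pow] at h0
      exact h0
    rw [QuotientGroup.mk_pow, ← hmkc, ← hpow]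
    exact hd1

lemma malcev_root (htf : Monoid.IsTorsionFree G) [Group.IsNilpotent G] (i : ℕ) :
    ∀ x : G, ∀ n : ℕ, 0 < n → x ^ n ∈ Subgroup.upperCentralSeries G i → x ∈ Subgroup.upperCentralSeries G i := by
  have descent : ∀ k : ℕ, ∀ x : G, ∀ n : ℕ, 0 < n → x ∈ Subgroup.upperCentralSeries G (i + k) →
      x ^ n ∈ Subgroup.upperCentralSeries G i → x ∈ Subgroup.upperCentralSeries G i := by
    intro k
    induction k with
    | zero => intro x n _ hx _; simpa using hx
    | succ k ih =>
      intro x n hn hx hxn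
      refine ih x n hn ?_ hxn
      exact ucs_step htf (i + k) x n hn hx
        (Subgroup.upperCentralSeries_mono G (Nat.le_add_right i k) hxn)
  intro x n hn hxn
  refine descent (Group.nilpotencyClass G) x n hn ?_ hxn
  have htop : Subgroup.upperCentralSeries G (i + Group.nilpotencyClass G) = ⊤ := by
    rw [eq_top_iff, ← Subgroup.upperCentralSeries_nilpotencyClass (G := G)]
    exact Subgroup.upperCentralSeries_mono G (Nat.le_add_left _ i)
  simp [htop]

/-- Mal'cev: the center quotient of a torsion-free nilpotent group is torsion-free. -/
lemma isTorsionFree_quotient_center (htf : Monoid.IsTorsionFree G) [Group.IsNilpotent G] :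
    Monoid.IsTorsionFree (G ⧸ center G) := by
  intro g hg hfin
  obtain ⟨n, hn, hgn⟩ := isOfFinOrder_iff_pow_eq_one.mp hfin
  induction g using QuotientGroup.induction_on with
  | H x =>
    have hxn : x ^ n ∈ center G := by
      rw [← QuotientGroup.eq_one_iff, QuotientGroup.mk_pow]
      exact hgn
    have hx : x ∈ center G := by
      have hm := malcev_root htf 1 x n hn (by rwa [Subgroup.upperCentralSeries_one])
      rwa [Subgroup.upperCentralSeries_one] at hm
    exact hg ((QuotientGroup.eq_one_iff x).mpr hx)

end Malcev

section Extension

variable {G : Type u} [Group G]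

/-- Extending a cone on the center and one on the central quotient to the whole group. -/
lemma isPosCone_extend {P₀ : Set (center G)} (h₀ : IsPosCone P₀)
    {P₁ : Set (G ⧸ center G)} (h₁ : IsPosCone P₁) : ∃ P : Set G, IsPosCone P := by
  classical
  refine ⟨{g | (QuotientGroup.mk g : G ⧸ center G) ∈ P₁ ∨
    ∃ h : g ∈ center G, (⟨g, h⟩ : center G) ∈ P₀}, ?_, ?_, ?_, ?_⟩
  · rintro (h | ⟨h, hm⟩)
    · exact h₁.1 h
    · exact h₀.1 hm
  · intro g hg
    by_cases hgc : g ∈ center G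
    · have hq : (QuotientGroup.mk g : G ⧸ center G) = 1 := (QuotientGroup.eq_one_iff g).mpr hgc
      have hqi : (QuotientGroup.mk g⁻¹ : G ⧸ center G) = 1 :=
        (QuotientGroup.eq_one_iff _).mpr (inv_mem hgc)
      have hne : (⟨g, hgc⟩ : center G) ≠ 1 := fun e => hg (by simpa using congrArg Subtype.val e)
      have hmem : g ∈ {g | (QuotientGroup.mk g : G ⧸ center G) ∈ P₁ ∨
          ∃ h : g ∈ center G, (⟨g, h⟩ : center G) ∈ P₀} ↔ (⟨g, hgc⟩ : center G) ∈ P₀ := by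
        constructor
        · rintro (h | ⟨h, hm⟩)
          · exact absurd (hq ▸ h) h₁.1
          · exact hm
        · exact fun hm => Or.inr ⟨hgc, hm⟩
      have hmemi : g⁻¹ ∈ {g | (QuotientGroup.mk g : G ⧸ center G) ∈ P₁ ∨
          ∃ h : g ∈ center G, (⟨g, h⟩ : center G) ∈ P₀} ↔ (⟨g, hgc⟩ : center G)⁻¹ ∈ P₀ := by
        constructor
        · rintro (h | ⟨h, hm⟩)
          · exact absurd (hqi ▸ h) h₁.1
          · exact hm
        · exact fun hm => Or.inr ⟨inv_mem hgc, hm⟩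
      rw [hmem, hmemi]
      exact h₀.2.1 _ hne
    · have hq : (QuotientGroup.mk g : G ⧸ center G) ≠ 1 :=
        fun e => hgc ((QuotientGroup.eq_one_iff g).mp e)
      have hmem : g ∈ {g | (QuotientGroup.mk g : G ⧸ center G) ∈ P₁ ∨
          ∃ h : g ∈ center G, (⟨g, h⟩ : center G) ∈ P₀} ↔
          (QuotientGroup.mk g : G ⧸ center G) ∈ P₁ := by
        constructor
        · rintro (h | ⟨h, hm⟩)
          · exact h
          · exact absurd h hgc
        · exact Or.inl
      have hmemi : g⁻¹ ∈ {g | (QuotientGroup.mk g : G ⧸ center G) ∈ P₁ ∨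
          ∃ h : g ∈ center G, (⟨g, h⟩ : center G) ∈ P₀} ↔
          (QuotientGroup.mk g : G ⧸ center G)⁻¹ ∈ P₁ := by
        constructor
        · rintro (h | ⟨h, hm⟩)
          · rw [← QuotientGroup.mk_inv]; exact h
          · exact absurd (by simpa using inv_mem h) hgc
        · intro h
          exact Or.inl (by rw [QuotientGroup.mk_inv]; exact h)
      rw [hmem, hmemi]
      exact h₁.2.1 _ hq
  · rintro x (hx | ⟨hx, hmx⟩) y (hy | ⟨hy, hmy⟩)
    · exact Or.inl (by rw [QuotientGroup.mk_mul]; exact h₁.2.2.1 _ hx _ hy)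
    · refine Or.inl ?_
      have h1 : (QuotientGroup.mk y : G ⧸ center G) = 1 := (QuotientGroup.eq_one_iff y).mpr hy
      rw [QuotientGroup.mk_mul, h1, mul_one]; exact hx
    · refine Or.inl ?_
      have h1 : (QuotientGroup.mk x : G ⧸ center G) = 1 := (QuotientGroup.eq_one_iff x).mpr hx
      rw [QuotientGroup.mk_mul, h1, one_mul]; exact hy
    · refine Or.inr ⟨mul_mem hx hy, ?_⟩
      have h1 : (⟨x * y, mul_mem hx hy⟩ : center G) = ⟨x, hx⟩ * ⟨y, hy⟩ := rfl
      rw [h1]; exact h₀.2.2.1 _ hmx _ hmy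
  · rintro g x (hx | ⟨hx, hmx⟩)
    · refine Or.inl ?_
      rw [QuotientGroup.mk_mul, QuotientGroup.mk_mul, QuotientGroup.mk_inv]
      exact h₁.2.2.2 _ _ hx
    · have hxc : g * x * g⁻¹ = x := by
        rw [Subgroup.mem_center_iff.mp hx g, mul_assoc]; simp
      rw [hxc]
      exact Or.inr ⟨hx, hmx⟩

end Extension

section Nilpotent

open scoped IsMulCommutative in
/-- Torsion-free nilpotent groups admit a positive cone. -/
lemma exists_isPosCone_of_nilpotent :
    ∀ (n : ℕ) (G : Type u) [Group G] [Group.IsNilpotent G],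
      Monoid.IsTorsionFree G → Group.nilpotencyClass G ≤ n → ∃ P : Set G, IsPosCone P := by
  intro n
  induction n with
  | zero =>
    intro G _ _ _ h0
    have : Subsingleton G := nilpotencyClass_zero_iff_subsingleton.mp (Nat.le_zero.mp h0)
    exact ⟨∅, isPosCone_empty_of_subsingleton⟩
  | succ n ih =>
    intro G _ _ htf hle
    obtain ⟨P₀, h₀⟩ := exists_isPosCone_of_commGroup (A := Subgroup.center G) (htf.subgroup (Subgroup.center G))
    have hqtf := isTorsionFree_quotient_center htf
    have hqle : Group.nilpotencyClass (G ⧸ Subgroup.center G) ≤ n := by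
      rw [nilpotencyClass_quotient_center]; omega
    obtain ⟨P₁, h₁⟩ := ih (G ⧸ Subgroup.center G) hqtf hqle
    exact isPosCone_extend h₀ h₁

lemma exists_isPosCone_of_nilpotent' (G : Type u) [Group G] [Group.IsNilpotent G]
    (htf : Monoid.IsTorsionFree G) : ∃ P : Set G, IsPosCone P :=
  exists_isPosCone_of_nilpotent (Group.nilpotencyClass G) G htf le_rfl

end Nilpotent

/-- Residually (torsion-free nilpotent) groups are orderable: they admit a positive cone
`P`, i.e. a subset such that `{P, P⁻¹}` partitions `G \ {1}`, `P · P ⊆ P` and `P` is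
invariant under conjugation. -/
theorem residuallyTorsionFreeNilpotent_orderable
    (G : Type*) [Group G]
    (hres : ∀ g : G, g ≠ 1 → ∃ (N : Subgroup G) (_ : N.Normal),
      g ∉ N ∧ Group.IsNilpotent (G ⧸ N) ∧ (∀ q : G ⧸ N, q ≠ 1 → ¬IsOfFinOrder q)) :
    ∃ P : Set G,
      (1 : G) ∉ P ∧
      (∀ g : G, g ≠ 1 → (g ∈ P ↔ g⁻¹ ∉ P)) ∧
      (∀ x ∈ P, ∀ y ∈ P, x * y ∈ P) ∧
      (∀ g : G, ∀ x ∈ P, g * x * g⁻¹ ∈ P) := by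
  classical
  choose N hNnorm hgN hnil htf using fun i : {g : G // g ≠ 1} => hres i.1 i.2
  haveI : ∀ i : {g : G // g ≠ 1}, (N i).Normal := hNnorm
  have hcone : ∀ i : {g : G // g ≠ 1}, ∃ P : Set (G ⧸ N i), IsPosCone P := by
    intro i
    haveI := hnil i
    exact exists_isPosCone_of_nilpotent' _ (htf i)
  choose C hC using hcone
  set r : {g : G // g ≠ 1} → {g : G // g ≠ 1} → Prop := WellOrderingRel with hrdef
  have hwf : WellFounded r := IsWellFounded.wf
  have huniq : ∀ (x : G) (i i' : {g : G // g ≠ 1}), x ∉ N i → (∀ j, r j i → x ∈ N j) →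
      x ∉ N i' → (∀ j, r j i' → x ∈ N j) → i = i' := by
    intro x i i' h1 h2 h1' h2'
    rcases trichotomous_of r i i' with h | h | h
    · exact absurd (h2' i h) h1
    · exact h
    · exact absurd (h2 i' h) h1'
  have hN_inv : ∀ (x : G) (j : {g : G // g ≠ 1}), x⁻¹ ∈ N j ↔ x ∈ N j :=
    fun x j => inv_mem_iff
  have hN_conj : ∀ (g x : G) (j : {g : G // g ≠ 1}), g * x * g⁻¹ ∈ N j ↔ x ∈ N j := by
    intro g x j
    constructor
    · intro h
      have h' := (hNnorm j).conj_mem _ h g⁻¹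
      simpa [mul_assoc] using h'
    · intro h
      exact (hNnorm j).conj_mem _ h g
  refine ⟨{x | x ≠ 1 ∧ ∃ i : {g : G // g ≠ 1}, x ∉ N i ∧ (∀ j, r j i → x ∈ N j) ∧
    (QuotientGroup.mk x : G ⧸ N i) ∈ C i}, ?_, ?_, ?_, ?_⟩
  · rintro ⟨h1, -⟩; exact h1 rfl
  · intro g hg
    constructor
    · rintro ⟨-, i, h1, h2, h3⟩ ⟨-, i', h1', h2', h3'⟩
      have h1'' : g ∉ N i' := fun h => h1' (inv_mem h)
      have h2'' : ∀ j, r j i' → g ∈ N j := fun j hj => (hN_inv g j).mp (h2' j hj)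
      cases huniq g i i' h1 h2 h1'' h2''
      have hne : (QuotientGroup.mk g : G ⧸ N i) ≠ 1 :=
        fun e => h1 ((QuotientGroup.eq_one_iff g).mp e)
      have hno := ((hC i).2.1 _ hne).mp h3
      rw [QuotientGroup.mk_inv] at h3'
      exact hno h3'
    · intro hni
      have hSne : ({i | g ∉ N i} : Set {g : G // g ≠ 1}).Nonempty := ⟨⟨g, hg⟩, hgN ⟨g, hg⟩⟩
      set i := hwf.min _ hSne with hidef
      have hmem : g ∉ N i := hwf.min_mem _ hSne
      have hmin : ∀ j, r j i → g ∈ N j := fun j hj => by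
        by_contra h
        exact hwf.not_lt_min _ h hj
      have hqne : (QuotientGroup.mk g : G ⧸ N i) ≠ 1 :=
        fun e => hmem ((QuotientGroup.eq_one_iff g).mp e)
      refine ⟨hg, i, hmem, hmin, ?_⟩
      by_contra hnotC
      apply hni
      refine ⟨inv_ne_one.mpr hg, i, fun h => hmem ((hN_inv g i).mp h),
        fun j hj => inv_mem (hmin j hj), ?_⟩
      rw [QuotientGroup.mk_inv]
      exact (hC i).total hqne hnotC
  · rintro x ⟨hx1, i, hxi, hxmin, hxC⟩ y ⟨hy1, j, hyj, hymin, hyC⟩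
    have main : ∀ k, (QuotientGroup.mk (x * y) : G ⧸ N k) ∈ C k →
        (∀ l, r l k → x ∈ N l) → (∀ l, r l k → y ∈ N l) →
        (x * y ≠ 1 ∧ ∃ i : {g : G // g ≠ 1}, x * y ∉ N i ∧ (∀ j, r j i → x * y ∈ N j) ∧
          (QuotientGroup.mk (x * y) : G ⧸ N i) ∈ C i) := by
      intro k hcmem hxl hyl
      have hxyk : x * y ∉ N k := fun h => (hC k).1
        (((QuotientGroup.eq_one_iff _).mpr h) ▸ hcmem)
      exact ⟨fun e => hxyk (e ▸ (N k).one_mem), k, hxyk,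
        fun l hl => mul_mem (hxl l hl) (hyl l hl), hcmem⟩
    rcases trichotomous_of r i j with hij | rfl | hji
    · have hy : y ∈ N i := hymin i hij
      have hmk : (QuotientGroup.mk (x * y) : G ⧸ N i) = QuotientGroup.mk x := by
        rw [QuotientGroup.mk_mul, (QuotientGroup.eq_one_iff y).mpr hy, mul_one]
      exact main i (hmk ▸ hxC) hxmin (fun l hl => hymin l (trans_of r hl hij))
    · have hmk : (QuotientGroup.mk (x * y) : G ⧸ N i) =
          QuotientGroup.mk x * QuotientGroup.mk y := by rw [QuotientGroup.mk_mul]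
      exact main i (by rw [hmk]; exact (hC i).2.2.1 _ hxC _ hyC) hxmin hymin
    · have hx : x ∈ N j := hxmin j hji
      have hmk : (QuotientGroup.mk (x * y) : G ⧸ N j) = QuotientGroup.mk y := by
        rw [QuotientGroup.mk_mul, (QuotientGroup.eq_one_iff x).mpr hx, one_mul]
      exact main j (hmk ▸ hyC) (fun l hl => hxmin l (trans_of r hl hji)) hymin
  · rintro g x ⟨hx1, i, h1, h2, h3⟩
    have hconjNi : g * x * g⁻¹ ∉ N i := fun h => h1 ((hN_conj g x i).mp h)
    refine ⟨fun e => hconjNi (e ▸ (N i).one_mem), i, hconjNi,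
      fun j hj => (hN_conj g x j).mpr (h2 j hj), ?_⟩
    rw [QuotientGroup.mk_mul, QuotientGroup.mk_mul, QuotientGroup.mk_inv]
    exact (hC i).2.2.2 _ _ h3
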